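/- Let $k$ be a field of characteristic different from $2$. The ring $R = k[a,b,c,d]/(a^2 + b^2 + b^3 c^5 + b^2 d^4)$ is not integrally closed in its fraction field: the element $a/b$ of the fraction field is integral over $R$ (it satisfies $(a/b)^2 + 1 + b c^5 + d^4 = 0$) but does not lie in $R$. -/

import Mathlib

open MvPolynomial

set_option synthInstance.maxHeartbeats 1000000
set_option maxHeartbeats 1000000

private lemma stmt10_no_sq (k : Type*) [Field k] (p : Polynomial k) :
    p * p ≠ -(Polynomial.X ^ 5 + Polynomial.C 1) := by
  intro h
  have h5 : (-(Polynomial.X ^ 5 + Polynomial.C (1:k))).natDegree = 5 := by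
    rw [Polynomial.natDegree_neg, Polynomial.natDegree_X_pow_add_C]
  have hp : p ≠ 0 := by
    rintro rfl
    rw [zero_mul] at h
    rw [← h, Polynomial.natDegree_zero] at h5
    exact absurd h5 (by norm_num)
  have := Polynomial.natDegree_mul hp hp
  rw [h, h5] at this
  omega

private lemma stmt10_irr_aux (k : Type*) [Field k] :
    Irreducible (Polynomial.X ^ 2 + Polynomial.C
      ((X 0:MvPolynomial (Fin 3) k)^2 + X 0 ^3 * X 1^5 + X 0^2 * X 2^4)) := by
  set s : MvPolynomial (Fin 3) k := (X 0)^2 + X 0 ^3 * X 1^5 + X 0^2 * X 2^4 with hs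
  have hmon : (Polynomial.X ^ 2 + Polynomial.C s).Monic :=
    Polynomial.monic_X_pow_add_C s two_ne_zero
  rw [hmon.irreducible_iff_irreducible_map_fraction_map
    (K := FractionRing (MvPolynomial (Fin 3) k))]
  have hmap : (Polynomial.X ^ 2 + Polynomial.C s).map
        (algebraMap (MvPolynomial (Fin 3) k) (FractionRing (MvPolynomial (Fin 3) k))) =
      Polynomial.X ^ 2 + Polynomial.C (algebraMap (MvPolynomial (Fin 3) k)
        (FractionRing (MvPolynomial (Fin 3) k)) s) := by
    simp [Polynomial.map_add, Polynomial.map_pow]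
  rw [hmap]
  rw [Polynomial.irreducible_iff_roots_eq_zero_of_degree_le_three
    (by simp [Polynomial.natDegree_X_pow_add_C])
    (by simp [Polynomial.natDegree_X_pow_add_C])]
  by_contra hroots
  obtain ⟨t, ht⟩ := Multiset.exists_mem_of_ne_zero hroots
  set φ := algebraMap (MvPolynomial (Fin 3) k) (FractionRing (MvPolynomial (Fin 3) k)) with hφ
  have hroot : (Polynomial.X ^ 2 + Polynomial.C (φ s)).IsRoot t :=
    ((Polynomial.mem_roots (by
      intro h0
      have := congrArg Polynomial.natDegree h0
      rw [Polynomial.natDegree_X_pow_add_C, Polynomial.natDegree_zero] at this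
      norm_num at this)).mp ht)
  have hint : IsIntegral (MvPolynomial (Fin 3) k) t := by
    refine ⟨Polynomial.X ^ 2 + Polynomial.C s, hmon, ?_⟩
    simpa [Polynomial.IsRoot, Polynomial.eval₂_add, Polynomial.eval₂_pow] using hroot
  obtain ⟨w, hw⟩ := IsIntegrallyClosed.isIntegral_iff.mp hint
  have hw2 : w * w + s = 0 := by
    have hinj := IsFractionRing.injective (MvPolynomial (Fin 3) k)
      (FractionRing (MvPolynomial (Fin 3) k))
    apply hinj
    rw [map_add, map_mul, map_zero]
    have hwt : (algebraMap (MvPolynomial (Fin 3) k)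
        (FractionRing (MvPolynomial (Fin 3) k))) w = t := hw
    rw [hwt]
    simpa [Polynomial.IsRoot, sq] using hroot
  have hcong := congrArg (MvPolynomial.aeval ![(1:Polynomial k), Polynomial.X, 0]) hw2
  rw [map_add, map_mul, map_zero] at hcong
  have hsval : (MvPolynomial.aeval ![(1:Polynomial k), Polynomial.X, 0]) s =
      Polynomial.X ^ 5 + Polynomial.C 1 := by
    simp [hs, map_add, map_mul, map_pow]
    ring
  rw [hsval] at hcong
  exact stmt10_no_sq k ((MvPolynomial.aeval ![(1:Polynomial k), Polynomial.X, 0]) w)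
    (by linear_combination hcong)

private lemma stmt10_e_comp (k : Type*) [Field k] :
    (finSuccEquiv k 3) ((X 0 : MvPolynomial (Fin 4) k) ^ 2 + (X 1) ^ 2
      + (X 1) ^ 3 * (X 2) ^ 5 + (X 1) ^ 2 * (X 3) ^ 4) =
    Polynomial.X ^ 2 + Polynomial.C
      ((X 0:MvPolynomial (Fin 3) k)^2 + X 0 ^3 * X 1^5 + X 0^2 * X 2^4) := by
  have c1 : (finSuccEquiv k 3) (X 1) = Polynomial.C (X 0) := by
    rw [show (X (1:Fin 4) : MvPolynomial (Fin 4) k) = X ((0:Fin 3).succ) from rfl,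
      finSuccEquiv_X_succ]
  have c2 : (finSuccEquiv k 3) (X 2) = Polynomial.C (X 1) := by
    rw [show (X (2:Fin 4) : MvPolynomial (Fin 4) k) = X ((1:Fin 3).succ) from rfl,
      finSuccEquiv_X_succ]
  have c3 : (finSuccEquiv k 3) (X 3) = Polynomial.C (X 2) := by
    rw [show (X (3:Fin 4) : MvPolynomial (Fin 4) k) = X ((2:Fin 3).succ) from rfl,
      finSuccEquiv_X_succ]
  rw [map_add, map_add, map_add, map_pow, map_pow, map_mul, map_pow, map_pow, map_mul, map_pow,
    map_pow, c1, c2, c3, finSuccEquiv_X_zero]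
  push_cast [map_add, map_mul, map_pow]
  ring


/-- For a field `k` of characteristic `≠ 2`, the ring
`R = k[a,b,c,d]/(a² + b² + b³c⁵ + b²d⁴)` is a domain which is not integrally closed in its
fraction field: the element `a/b` of the fraction field (i.e. the element `x` with
`b·x = a`, which exists and is unique since `b ≠ 0`) is integral over `R` but does not lie
in (the image of) `R`. -/
theorem stmt10 (k : Type*) [Field k] (h2 : (2 : k) ≠ 0)
    (I : Ideal (MvPolynomial (Fin 4) k))
    (hI : I = Ideal.span {(X 0 : MvPolynomial (Fin 4) k) ^ 2 + (X 1) ^ 2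
      + (X 1) ^ 3 * (X 2) ^ 5 + (X 1) ^ 2 * (X 3) ^ 4}) :
    IsDomain (MvPolynomial (Fin 4) k ⧸ I) ∧
    Ideal.Quotient.mk I (X 1) ≠ 0 ∧
    ∀ x : FractionRing (MvPolynomial (Fin 4) k ⧸ I),
      algebraMap (MvPolynomial (Fin 4) k ⧸ I) (FractionRing (MvPolynomial (Fin 4) k ⧸ I))
          (Ideal.Quotient.mk I (X 1)) * x =
        algebraMap (MvPolynomial (Fin 4) k ⧸ I) (FractionRing (MvPolynomial (Fin 4) k ⧸ I))
          (Ideal.Quotient.mk I (X 0)) →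
      IsIntegral (MvPolynomial (Fin 4) k ⧸ I) x ∧
        x ∉ Set.range (algebraMap (MvPolynomial (Fin 4) k ⧸ I)
          (FractionRing (MvPolynomial (Fin 4) k ⧸ I))) := by
  set f : MvPolynomial (Fin 4) k := (X 0) ^ 2 + (X 1) ^ 2
      + (X 1) ^ 3 * (X 2) ^ 5 + (X 1) ^ 2 * (X 3) ^ 4 with hf
  set s : MvPolynomial (Fin 3) k := (X 0)^2 + X 0 ^3 * X 1^5 + X 0^2 * X 2^4 with hs
  set F2 : Polynomial (MvPolynomial (Fin 3) k) := Polynomial.X ^ 2 + Polynomial.C s with hF2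
  have hmon : F2.Monic := Polynomial.monic_X_pow_add_C s two_ne_zero
  have hdegF2 : F2.degree = 2 := Polynomial.degree_X_pow_add_C (by norm_num) s
  have hef : (finSuccEquiv k 3) f = F2 := stmt10_e_comp k
  have hfirr : Irreducible f := by
    have := stmt10_irr_aux k
    rw [← hF2, ← hef] at this
    exact (MulEquiv.irreducible_iff (finSuccEquiv k 3)).mp this
  have hfprime : Prime f := UniqueFactorizationMonoid.irreducible_iff_prime.mp hfirr
  have hIprime : I.IsPrime := by
    rw [hI]
    exact (Ideal.span_singleton_prime hfprime.ne_zero).mpr hfprime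
  refine ⟨Ideal.Quotient.isDomain I, ?_, ?_⟩
  · -- X 1 ∉ I
    rw [Ne, Ideal.Quotient.eq_zero_iff_mem, hI, Ideal.mem_span_singleton]
    intro hdvd
    have hdvd2 : F2 ∣ Polynomial.C (X 0 : MvPolynomial (Fin 3) k) := by
      have := map_dvd (finSuccEquiv k 3) hdvd
      rwa [hef, show (finSuccEquiv k 3) (X 1) = Polynomial.C (X 0) by
        rw [show (X (1:Fin 4) : MvPolynomial (Fin 4) k) = X ((0:Fin 3).succ) from rfl,
          finSuccEquiv_X_succ]] at this
    have := Polynomial.eq_zero_of_dvd_of_degree_lt hdvd2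
      (by rw [hdegF2, Polynomial.degree_C (X_ne_zero (R := k) (0 : Fin 3))]; norm_num)
    exact X_ne_zero (R := k) (0 : Fin 3) (by simpa using this)
  · intro x hx
    haveI : I.IsPrime := hIprime
    set R := MvPolynomial (Fin 4) k ⧸ I
    set φ := algebraMap R (FractionRing R) with hφ
    have hinj : Function.Injective φ := IsFractionRing.injective R (FractionRing R)
    have hb : Ideal.Quotient.mk I (X 1) ≠ 0 := by
      rw [Ne, Ideal.Quotient.eq_zero_iff_mem, hI, Ideal.mem_span_singleton]
      intro hdvd
      have hdvd2 : F2 ∣ Polynomial.C (X 0 : MvPolynomial (Fin 3) k) := by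
        have := map_dvd (finSuccEquiv k 3) hdvd
        rwa [hef, show (finSuccEquiv k 3) (X 1) = Polynomial.C (X 0) by
          rw [show (X (1:Fin 4) : MvPolynomial (Fin 4) k) = X ((0:Fin 3).succ) from rfl,
            finSuccEquiv_X_succ]] at this
      have := Polynomial.eq_zero_of_dvd_of_degree_lt hdvd2
        (by rw [hdegF2, Polynomial.degree_C (X_ne_zero (R := k) (0 : Fin 3))]; norm_num)
      exact X_ne_zero (R := k) (0 : Fin 3) (by simpa using this)
    have hφb : φ (Ideal.Quotient.mk I (X 1)) ≠ 0 := fun h => hb (hinj (by rw [h, map_zero]))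
    have hfmem : f ∈ I := by rw [hI]; exact Ideal.subset_span rfl
    have hf0 : Ideal.Quotient.mk I f = 0 := Ideal.Quotient.eq_zero_iff_mem.mpr hfmem
    set c₀ : R := Ideal.Quotient.mk I (1 + X 1 * X 2 ^ 5 + X 3 ^ 4) with hc₀
    have hrel : (Ideal.Quotient.mk I (X 0))^2
        + (Ideal.Quotient.mk I (X 1))^2 * c₀ = 0 := by
      rw [hc₀, ← map_pow, ← map_pow, ← map_mul, ← map_add, ← hf0]
      congr 1
      rw [hf]
      ring
    have hxsq : x ^ 2 + φ c₀ = 0 := by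
      have hkey : (φ (Ideal.Quotient.mk I (X 1)))^2 * (x ^ 2 + φ c₀) = 0 := by
        have expand : (φ (Ideal.Quotient.mk I (X 1)))^2 * (x ^ 2 + φ c₀)
            = (φ (Ideal.Quotient.mk I (X 1)) * x)^2
              + φ ((Ideal.Quotient.mk I (X 1))^2 * c₀) := by
          rw [map_mul, map_pow]; ring
        rw [expand, hx, ← map_pow, ← map_add, hrel, map_zero]
      rcases mul_eq_zero.mp hkey with h | h
      · exact absurd h (pow_ne_zero 2 hφb)
      · exact h
    constructor
    · refine ⟨Polynomial.X ^ 2 + Polynomial.C c₀,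
        Polynomial.monic_X_pow_add_C c₀ two_ne_zero, ?_⟩
      simpa [Polynomial.eval₂_add, Polynomial.eval₂_pow] using hxsq
    · rintro ⟨r, hr⟩
      have hbr : Ideal.Quotient.mk I (X 1) * r = Ideal.Quotient.mk I (X 0) := by
        apply hinj
        rw [map_mul, hr, hx]
      obtain ⟨g, rfl⟩ := Ideal.Quotient.mk_surjective r
      rw [← map_mul, ← sub_eq_zero, ← map_sub, Ideal.Quotient.eq_zero_iff_mem, hI,
        Ideal.mem_span_singleton] at hbr
      have hdvd1 : F2 ∣ Polynomial.C (X 0 : MvPolynomial (Fin 3) k) * (finSuccEquiv k 3) g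
          - Polynomial.X := by
        have := map_dvd (finSuccEquiv k 3) hbr
        rwa [hef, map_sub, map_mul, show (finSuccEquiv k 3) (X 1) = Polynomial.C (X 0) by
          rw [show (X (1:Fin 4) : MvPolynomial (Fin 4) k) = X ((0:Fin 3).succ) from rfl,
            finSuccEquiv_X_succ], finSuccEquiv_X_zero] at this
      set G : Polynomial (MvPolynomial (Fin 3) k) := (finSuccEquiv k 3) g with hG
      set H : Polynomial (MvPolynomial (Fin 3) k) := G %ₘ F2 with hH
      have hGH : F2 ∣ G - H := by
        refine ⟨G /ₘ F2, ?_⟩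
        rw [hH, Polynomial.modByMonic_eq_sub_mul_div G F2]
        ring
      have hdvd2 : F2 ∣ Polynomial.C (X 0 : MvPolynomial (Fin 3) k) * H - Polynomial.X := by
        have heq : Polynomial.C (X 0 : MvPolynomial (Fin 3) k) * H - Polynomial.X
            = (Polynomial.C (X 0) * G - Polynomial.X) - Polynomial.C (X 0) * (G - H) := by
          ring
        rw [heq]
        exact dvd_sub hdvd1 (hGH.mul_left _)
      have hdegH : H.degree < 2 := by
        rw [← hdegF2]
        exact Polynomial.degree_modByMonic_lt G hmon
      have hdeglt : (Polynomial.C (X 0 : MvPolynomial (Fin 3) k) * H - Polynomial.X).degree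
          < F2.degree := by
        rw [hdegF2]
        refine lt_of_le_of_lt (Polynomial.degree_sub_le _ _) (max_lt ?_ ?_)
        · calc (Polynomial.C (X 0 : MvPolynomial (Fin 3) k) * H).degree
              ≤ (Polynomial.C (X 0 : MvPolynomial (Fin 3) k)).degree + H.degree :=
                Polynomial.degree_mul_le _ _
            _ ≤ 0 + H.degree := add_le_add Polynomial.degree_C_le le_rfl
            _ = H.degree := zero_add _
            _ < 2 := hdegH
        · rw [Polynomial.degree_X]
          norm_num
      have hzero := Polynomial.eq_zero_of_dvd_of_degree_lt hdvd2 hdeglt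
      rw [sub_eq_zero] at hzero
      have hcoeff := congrArg (fun p => Polynomial.coeff p 1) hzero
      simp only [Polynomial.coeff_C_mul, Polynomial.coeff_X_one] at hcoeff
      have := congrArg MvPolynomial.constantCoeff hcoeff
      rw [map_mul, constantCoeff_X, zero_mul, map_one] at this
      exact zero_ne_one this
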